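/- Let G : ℝ × ℝ → ℝ be twice continuously differentiable in a neighbourhood of (x*, p*), with G(x*, p*) = 0 and ∂G/∂x (x*, p*) = 0. Assume ∂G/∂p (x*, p*) ≠ 0, ∂²G/∂x² (x*, p*) ≠ 0, and ∂G/∂p (x*, p*) · ∂²G/∂x² (x*, p*) < 0. Then there exist ε > 0 and δ > 0 such that for every p with p* < p < p* + δ, the equation G(x, p) = 0 has exactly two solutions x with |x − x*| < ε; that is, there are x₁ < x₂ in (x* − ε, x* + ε) with G(x₁, p) = G(x₂, p) = 0 and every solution in (x* − ε, x* + ε) equals x₁ or x₂. -/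

import Mathlib

open Set Filter Topology

private lemma slice_x (G : ℝ×ℝ → ℝ) (x p : ℝ) (h : DifferentiableAt ℝ G (x,p)) :
    HasDerivAt (fun x' => G (x', p)) (fderiv ℝ G (x,p) (1,0)) x := by
  have hi : HasFDerivAt (fun x' : ℝ => (x', p)) ((ContinuousLinearMap.id ℝ ℝ).prod 0) x :=
    (hasFDerivAt_id x).prodMk (hasFDerivAt_const p x)
  have := (h.hasFDerivAt.comp x hi).hasDerivAt
  exact this

private lemma slice_p (G : ℝ×ℝ → ℝ) (x p : ℝ) (h : DifferentiableAt ℝ G (x,p)) :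
    HasDerivAt (fun p' => G (x, p')) (fderiv ℝ G (x,p) (0,1)) p := by
  have hi : HasFDerivAt (fun p' : ℝ => (x, p')) ((0 : ℝ →L[ℝ] ℝ).prod (ContinuousLinearMap.id ℝ ℝ)) p :=
    (hasFDerivAt_const x p).prodMk (hasFDerivAt_id p)
  have := (h.hasFDerivAt.comp p hi).hasDerivAt
  exact this

private theorem key (G : ℝ × ℝ → ℝ) (xs ps : ℝ)
    (hG : ContDiffAt ℝ 2 G (xs, ps))
    (h0 : G (xs, ps) = 0)
    (hGx : deriv (fun x => G (x, ps)) xs = 0)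
    (hGp : deriv (fun p => G (xs, p)) ps < 0)
    (hGxx : 0 < deriv (deriv (fun x => G (x, ps))) xs) :
    ∃ ε > (0:ℝ), ∃ δ > (0:ℝ), ∀ p : ℝ, ps < p → p < ps + δ →
      ∃ x₁ x₂ : ℝ, x₁ < x₂ ∧
        x₁ ∈ Set.Ioo (xs - ε) (xs + ε) ∧ x₂ ∈ Set.Ioo (xs - ε) (xs + ε) ∧
        G (x₁, p) = 0 ∧ G (x₂, p) = 0 ∧
        ∀ x ∈ Set.Ioo (xs - ε) (xs + ε), G (x, p) = 0 → x = x₁ ∨ x = x₂ := by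
  obtain ⟨u, hu, hGu⟩ := hG.contDiffOn le_rfl (by simp)
  obtain ⟨U, hUu, hUopen, hU0⟩ := mem_nhds_iff.mp hu
  have hGU : ContDiffOn ℝ 2 G U := hGu.mono hUu
  set Gx : ℝ×ℝ → ℝ := fun q => fderiv ℝ G q (1,0) with hGxdef
  set Gxx : ℝ×ℝ → ℝ := fun q => fderiv ℝ Gx q (1,0) with hGxxdef
  have hGx1 : ContDiffOn ℝ 1 Gx U :=
    (hGU.fderiv_of_isOpen hUopen (by norm_num)).clm_apply contDiffOn_const
  have hGdiff : ∀ q ∈ U, DifferentiableAt ℝ G q := fun q hq =>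
    (hGU.differentiableOn (by norm_num)).differentiableAt (hUopen.mem_nhds hq)
  have hGxdiff : ∀ q ∈ U, DifferentiableAt ℝ Gx q := fun q hq =>
    (hGx1.differentiableOn (by norm_num)).differentiableAt (hUopen.mem_nhds hq)
  have hGxxcont : ContinuousOn Gxx U :=
    (hGx1.continuousOn_fderiv_of_isOpen hUopen le_rfl).clm_apply continuousOn_const
  have hDx : ∀ x p : ℝ, (x,p) ∈ U → HasDerivAt (fun x' => G (x', p)) (Gx (x,p)) x :=
    fun x p hq => slice_x G x p (hGdiff _ hq)
  have hDxx : ∀ x p : ℝ, (x,p) ∈ U → HasDerivAt (fun x' => Gx (x', p)) (Gxx (x,p)) x :=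
    fun x p hq => slice_x Gx x p (hGxdiff _ hq)
  -- translate hypotheses
  have hxs0 : Gx (xs, ps) = 0 := ((hDx xs ps hU0).deriv).symm.trans hGx
  have hVx : (deriv (fun x' => G (x', ps))) =ᶠ[𝓝 xs] (fun x => Gx (x, ps)) := by
    have hop : IsOpen {x : ℝ | (x, ps) ∈ U} :=
      hUopen.preimage (continuous_id.prodMk continuous_const)
    filter_upwards [hop.mem_nhds hU0] with x hx
    exact (hDx x ps hx).deriv
  have hGxx0 : 0 < Gxx (xs, ps) := by
    have := hVx.deriv_eq
    rw [this, (hDxx xs ps hU0).deriv] at hGxx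
    exact hGxx
  have hGp0 : fderiv ℝ G (xs,ps) (0,1) < 0 := by
    rw [← (slice_p G xs ps (hGdiff _ hU0)).deriv]
    exact hGp
  -- positivity region
  have hcontAt : ContinuousAt Gxx (xs,ps) := hGxxcont.continuousAt (hUopen.mem_nhds hU0)
  have hWmem : U ∩ Gxx ⁻¹' Ioi 0 ∈ 𝓝 (xs,ps) :=
    Filter.inter_mem (hUopen.mem_nhds hU0) (hcontAt (Ioi_mem_nhds hGxx0))
  obtain ⟨r, hr, hball⟩ := Metric.mem_nhds_iff.mp hWmem
  set ε : ℝ := r/2 with hεdef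
  have hε : 0 < ε := by positivity
  have hrect : ∀ x p : ℝ, |x - xs| ≤ ε → |p - ps| ≤ ε → (x,p) ∈ U ∧ 0 < Gxx (x,p) := by
    intro x p hx hp
    have hm : (x,p) ∈ Metric.ball (xs,ps) r := by
      rw [Metric.mem_ball, Prod.dist_eq, sup_lt_iff]
      constructor <;> rw [Real.dist_eq] <;> [linarith; linarith]
    exact hball hm
  set a : ℝ := xs - ε with hadef
  set b : ℝ := xs + ε with hbdef
  have hab : a < b := by simp [hadef, hbdef]; linarith
  have haxs : a < xs := by simp [hadef]; linarith
  have hxsb : xs < b := by simp [hbdef]; linarith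
  have hmemIcc : ∀ x ∈ Icc a b, |x - xs| ≤ ε := by
    intro x hx; rw [abs_sub_le_iff]; constructor <;> [linarith [hx.2]; linarith [hx.1]]
  -- per-parameter facts
  have keyp : ∀ p : ℝ, |p - ps| ≤ ε →
      (∀ x ∈ Icc a b, HasDerivAt (fun x' => G (x', p)) (Gx (x,p)) x) ∧
      StrictMonoOn (fun x => Gx (x, p)) (Icc a b) := by
    intro p hp
    have hmem : ∀ x ∈ Icc a b, (x,p) ∈ U ∧ 0 < Gxx (x,p) :=
      fun x hx => hrect x p (hmemIcc x hx) hp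
    refine ⟨fun x hx => hDx x p (hmem x hx).1, ?_⟩
    refine strictMonoOn_of_deriv_pos (convex_Icc a b)
      (fun x hx => (hDxx x p (hmem x hx).1).continuousAt.continuousWithinAt) ?_
    intro x hx
    rw [interior_Icc] at hx
    rw [(hDxx x p (hmem x (Ioo_subset_Icc_self hx)).1).deriv]
    exact (hmem x (Ioo_subset_Icc_self hx)).2
  have hpsε : |ps - ps| ≤ ε := by simp [le_of_lt hε]
  obtain ⟨hDps, hMps⟩ := keyp ps hpsε
  have hxsIcc : xs ∈ Icc a b := ⟨haxs.le, hxsb.le⟩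
  -- positivity of G at (a, ps) and (b, ps)
  have hbpos : 0 < G (b, ps) := by
    have hmono : StrictMonoOn (fun x => G (x, ps)) (Icc xs b) := by
      refine strictMonoOn_of_deriv_pos (convex_Icc xs b)
        (fun x hx => (hDps x (Icc_subset_Icc haxs.le le_rfl hx)).continuousAt.continuousWithinAt) ?_
      intro x hx
      rw [interior_Icc] at hx
      have hxI : x ∈ Icc a b := ⟨le_trans haxs.le hx.1.le, hx.2.le⟩
      rw [(hDps x hxI).deriv]
      have := hMps hxsIcc hxI hx.1
      simpa [hxs0] using this
    have := hmono (left_mem_Icc.mpr hxsb.le) (right_mem_Icc.mpr hxsb.le) hxsb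
    simpa [h0] using this
  have hapos : 0 < G (a, ps) := by
    have hmono : StrictAntiOn (fun x => G (x, ps)) (Icc a xs) := by
      refine strictAntiOn_of_deriv_neg (convex_Icc a xs)
        (fun x hx => (hDps x (Icc_subset_Icc le_rfl hxsb.le hx)).continuousAt.continuousWithinAt) ?_
      intro x hx
      rw [interior_Icc] at hx
      have hxI : x ∈ Icc a b := ⟨hx.1.le, le_trans hx.2.le hxsb.le⟩
      rw [(hDps x hxI).deriv]
      have := hMps hxI hxsIcc hx.2
      simpa [hxs0] using this
    have := hmono (left_mem_Icc.mpr haxs.le) (right_mem_Icc.mpr haxs.le) haxs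
    simpa [h0] using this
  -- eventual facts in p
  have hGcont : ContinuousOn G U := hGU.continuousOn
  have hconta : ContinuousAt (fun p => G (a, p)) ps := by
    have h1 : ContinuousAt G (a, ps) :=
      hGcont.continuousAt (hUopen.mem_nhds (hrect a ps (by simp [hadef, abs_of_pos hε, le_of_lt hε]) hpsε).1)
    exact h1.comp (Continuous.continuousAt (continuous_const.prodMk continuous_id))
  have hcontb : ContinuousAt (fun p => G (b, p)) ps := by
    have h1 : ContinuousAt G (b, ps) :=
      hGcont.continuousAt (hUopen.mem_nhds (hrect b ps (by simp [hbdef, abs_of_pos hε, le_of_lt hε]) hpsε).1)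
    exact h1.comp (Continuous.continuousAt (continuous_const.prodMk continuous_id))
  have ev1 : ∀ᶠ p in 𝓝 ps, 0 < G (a, p) := hconta (Ioi_mem_nhds hapos)
  have ev2 : ∀ᶠ p in 𝓝 ps, 0 < G (b, p) := hcontb (Ioi_mem_nhds hbpos)
  have ev3 : ∀ᶠ p in 𝓝 ps, |p - ps| ≤ ε := by
    have : Icc (ps - ε) (ps + ε) ∈ 𝓝 ps := Icc_mem_nhds (by linarith) (by linarith)
    filter_upwards [this] with p hp
    rw [abs_sub_le_iff]; constructor <;> [linarith [hp.2]; linarith [hp.1]]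
  have ev4 : ∀ᶠ p in 𝓝[>] ps, G (xs, p) < 0 := by
    have hg : HasDerivAt (fun p => G (xs, p)) (fderiv ℝ G (xs,ps) (0,1)) ps :=
      slice_p G xs ps (hGdiff _ hU0)
    have hslope := hasDerivAt_iff_tendsto_slope.mp hg
    have h1 : ∀ᶠ p in 𝓝[≠] ps, slope (fun p => G (xs, p)) ps p < 0 := hslope (Iio_mem_nhds hGp0)
    have h2 : ∀ᶠ p in 𝓝[>] ps, slope (fun p => G (xs, p)) ps p < 0 :=
      h1.filter_mono (nhdsWithin_mono ps (fun y hy => ne_of_gt hy))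
    filter_upwards [h2, self_mem_nhdsWithin] with p hp hp'
    have hps' : (0:ℝ) < p - ps := sub_pos.mpr hp'
    rw [slope_def_field, h0, sub_zero] at hp
    rcases div_neg_iff.mp hp with ⟨h1', h2'⟩ | ⟨h1', h2'⟩
    · linarith
    · exact h1'
  -- assemble δ
  have evAll : {p : ℝ | 0 < G (a, p) ∧ 0 < G (b, p) ∧ |p - ps| ≤ ε ∧ G (xs, p) < 0} ∈ 𝓝[>] ps := by
    have e1 : ∀ᶠ p in 𝓝[>] ps, 0 < G (a, p) := ev1.filter_mono nhdsWithin_le_nhds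
    have e2 : ∀ᶠ p in 𝓝[>] ps, 0 < G (b, p) := ev2.filter_mono nhdsWithin_le_nhds
    have e3 : ∀ᶠ p in 𝓝[>] ps, |p - ps| ≤ ε := ev3.filter_mono nhdsWithin_le_nhds
    filter_upwards [e1, e2, e3, ev4] with p h1' h2' h3' h4'
    exact ⟨h1', h2', h3', h4'⟩
  obtain ⟨v, hv, hIoo⟩ := mem_nhdsGT_iff_exists_Ioo_subset.mp evAll
  refine ⟨ε, hε, v - ps, by simpa using hv, ?_⟩
  intro p hp1 hp2
  have hpI : p ∈ Ioo ps v := ⟨hp1, by linarith⟩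
  obtain ⟨hpa, hpb, hpε, hpxs⟩ := hIoo hpI
  obtain ⟨hDp, hMp⟩ := keyp p hpε
  set f : ℝ → ℝ := fun x => G (x, p) with hfdef
  have hfc : ContinuousOn f (Icc a b) :=
    fun x hx => (hDp x hx).continuousAt.continuousWithinAt
  -- two zeros by IVT
  have hmem0₁ : (0:ℝ) ∈ Ioo (f xs) (f a) := ⟨hpxs, hpa⟩
  obtain ⟨x₁, hx₁mem, hx₁0⟩ := intermediate_value_Ioo' haxs.le
    (hfc.mono (Icc_subset_Icc le_rfl hxsb.le)) hmem0₁
  have hmem0₂ : (0:ℝ) ∈ Ioo (f xs) (f b) := ⟨hpxs, hpb⟩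
  obtain ⟨x₂, hx₂mem, hx₂0⟩ := intermediate_value_Ioo hxsb.le
    (hfc.mono (Icc_subset_Icc haxs.le le_rfl)) hmem0₂
  have hx₁Ioo : x₁ ∈ Ioo a b := ⟨hx₁mem.1, lt_trans hx₁mem.2 hxsb⟩
  have hx₂Ioo : x₂ ∈ Ioo a b := ⟨lt_trans haxs hx₂mem.1, hx₂mem.2⟩
  have hx₁x₂ : x₁ < x₂ := lt_trans hx₁mem.2 hx₂mem.1
  -- no three zeros
  have h3z : ∀ u' v' w' : ℝ, u' ∈ Icc a b → w' ∈ Icc a b → u' < v' → v' < w' →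
      f u' = 0 → f v' = 0 → f w' = 0 → False := by
    intro u' v' w' hu' hw' huv hvw fu fv fw
    have hIuv : Icc u' v' ⊆ Icc a b := Icc_subset_Icc hu'.1 (le_trans hvw.le hw'.2)
    have hIvw : Icc v' w' ⊆ Icc a b := Icc_subset_Icc (le_trans hu'.1 huv.le) hw'.2
    obtain ⟨c, hc, hc0⟩ := exists_deriv_eq_zero huv (hfc.mono hIuv) (fu.trans fv.symm)
    obtain ⟨d, hd, hd0⟩ := exists_deriv_eq_zero hvw (hfc.mono hIvw) (fv.trans fw.symm)
    have hcIcc : c ∈ Icc a b := hIuv (Ioo_subset_Icc_self hc)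
    have hdIcc : d ∈ Icc a b := hIvw (Ioo_subset_Icc_self hd)
    have e1 : Gx (c, p) = 0 := by rw [← (hDp c hcIcc).deriv]; exact hc0
    have e2 : Gx (d, p) = 0 := by rw [← (hDp d hdIcc).deriv]; exact hd0
    have hlt := hMp hcIcc hdIcc (lt_trans hc.2 hd.1)
    simp only at hlt
    rw [e1, e2] at hlt
    exact lt_irrefl 0 hlt
  refine ⟨x₁, x₂, hx₁x₂, hx₁Ioo, hx₂Ioo, hx₁0, hx₂0, ?_⟩
  intro x hx hx0
  have hxIcc : x ∈ Icc a b := Ioo_subset_Icc_self hx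
  have hx₁Icc : x₁ ∈ Icc a b := Ioo_subset_Icc_self hx₁Ioo
  have hx₂Icc : x₂ ∈ Icc a b := Ioo_subset_Icc_self hx₂Ioo
  rcases lt_trichotomy x x₁ with h | h | h
  · exact absurd (h3z x x₁ x₂ hxIcc hx₂Icc h hx₁x₂ hx0 hx₁0 hx₂0) not_false
  · exact Or.inl h
  · rcases lt_trichotomy x x₂ with h' | h' | h'
    · exact absurd (h3z x₁ x x₂ hx₁Icc hx₂Icc h h' hx₁0 hx0 hx₂0) not_false
    · exact Or.inr h'
    · exact absurd (h3z x₁ x₂ x hx₁Icc hxIcc hx₁x₂ h' hx₁0 hx₂0 hx0) not_false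

/-- Saddle-node bifurcation theorem (case `G_p · G_xx < 0`): exactly two stationary
points near `(xs, ps)` for parameters `p` above `ps`. -/
theorem saddle_node_two_solutions_above
    (G : ℝ × ℝ → ℝ) (xs ps : ℝ)
    (hG : ContDiffAt ℝ 2 G (xs, ps))
    (h0 : G (xs, ps) = 0)
    (hGx : deriv (fun x => G (x, ps)) xs = 0)
    (hGp : deriv (fun p => G (xs, p)) ps ≠ 0)
    (hGxx : deriv (deriv (fun x => G (x, ps))) xs ≠ 0)
    (hsign : deriv (fun p => G (xs, p)) ps *
        deriv (deriv (fun x => G (x, ps))) xs < 0) :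
    ∃ ε > (0:ℝ), ∃ δ > (0:ℝ), ∀ p : ℝ, ps < p → p < ps + δ →
      ∃ x₁ x₂ : ℝ, x₁ < x₂ ∧
        x₁ ∈ Set.Ioo (xs - ε) (xs + ε) ∧ x₂ ∈ Set.Ioo (xs - ε) (xs + ε) ∧
        G (x₁, p) = 0 ∧ G (x₂, p) = 0 ∧
        ∀ x ∈ Set.Ioo (xs - ε) (xs + ε), G (x, p) = 0 → x = x₁ ∨ x = x₂ := by
  rcases hGxx.lt_or_gt with hneg | hpos
  · -- second derivative negative : apply `key` to `-G`
    have hGp' : 0 < deriv (fun p => G (xs, p)) ps := by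
      rcases hGp.lt_or_gt with h | h
      · nlinarith
      · exact h
    have hd1 : (deriv (fun x => -G (x, ps))) = fun y => -(deriv (fun x => G (x, ps)) y) :=
      funext fun y => deriv.neg
    obtain ⟨ε, hε, δ, hδ, H⟩ := key (fun q => -G q) xs ps hG.neg (by simp [h0])
      (by rw [deriv.fun_neg, hGx, neg_zero])
      (by rw [deriv.fun_neg]; linarith)
      (by rw [hd1, deriv.fun_neg]; linarith)
    refine ⟨ε, hε, δ, hδ, fun p hp1 hp2 => ?_⟩
    obtain ⟨x₁, x₂, h12, hm1, hm2, hz1, hz2, huniq⟩ := H p hp1 hp2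
    exact ⟨x₁, x₂, h12, hm1, hm2, neg_eq_zero.mp hz1, neg_eq_zero.mp hz2,
      fun x hx hx0 => huniq x hx (neg_eq_zero.mpr hx0)⟩
  · have hGp' : deriv (fun p => G (xs, p)) ps < 0 := by
      rcases hGp.lt_or_gt with h | h
      · exact h
      · nlinarith
    exact key G xs ps hG h0 hGx hGp' hpos
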